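/- Let P ≥ Q > 0 be real numbers, let R = [0,P] × [0,Q] ⊂ ℝ², and let s ∈ ℂ with Re(s) > 2. Then s(s−1) · ∫_R min(x, P−x, y, Q−y)^{s−2} dx dy = 8·(Q/2)^s + 2s(P−Q)·(Q/2)^{s−1}, where powers of positive reals are complex powers. -/

import Mathlib

open MeasureTheory intervalIntegral Set

lemma contOn_cpowR (w : ℂ) (hw : 0 < w.re) :
    ContinuousOn (fun u : ℝ => (u : ℂ) ^ w) (Set.Ici 0) := by
  intro u hu
  apply ContinuousAt.continuousWithinAt
  rcases eq_or_lt_of_le (Set.mem_Ici.mp hu : (0:ℝ) ≤ u) with h | h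
  · subst h
    have h0 : ContinuousAt (fun x : ℂ × ℂ => x.1 ^ x.2) (((0:ℝ) : ℂ), w) := by
      simpa using Complex.continuousAt_cpow_zero_of_re_pos hw
    have h1 : ContinuousAt (fun u : ℝ => ((u : ℂ), w)) 0 :=
      (Complex.continuous_ofReal.prodMk continuous_const).continuousAt
    exact ContinuousAt.comp (f := fun u : ℝ => ((u : ℂ), w)) h0 h1
  · exact (continuousAt_cpow_const (by exact Or.inl (by simpa using h))).comp
      Complex.continuous_ofReal.continuousAt

lemma inner_eval (P : ℝ) (s : ℂ) (hs : 2 < s.re) (t : ℝ) (ht : 0 ≤ t) (ht2 : 2 * t ≤ P) :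
    (∫ x in Icc (0:ℝ) P, ((min (min x (P - x)) t : ℝ) : ℂ) ^ (s - 2))
      = 2 * (t : ℂ) ^ (s - 1) / (s - 1) + ((P : ℂ) - 2 * t) * (t : ℂ) ^ (s - 2) := by
  have hre2 : 0 < (s - 2).re := by simp [Complex.sub_re]; linarith
  have hre1 : 0 < (s - 1).re := by simp [Complex.sub_re]; linarith
  have hs1 : (s - 1) ≠ 0 := fun h => by simp [h] at hre1
  have htP : t ≤ P - t := by linarith
  have hP : (0:ℝ) ≤ P := by linarith
  set f : ℝ → ℂ := fun x => ((min (min x (P - x)) t : ℝ) : ℂ) ^ (s - 2) with hf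
  have hcont : ContinuousOn f (Icc 0 P) := by
    apply (contOn_cpowR (s - 2) hre2).comp
    · exact Continuous.continuousOn
        ((continuous_id.min (continuous_const.sub continuous_id)).min continuous_const)
    · intro x hx
      simp only [mem_Ici, le_min_iff]
      exact ⟨⟨hx.1, by simpa using hx.2⟩, ht⟩
  have hsub : ∀ a b : ℝ, 0 ≤ a → a ≤ b → b ≤ P → IntervalIntegrable f volume a b := by
    intro a b ha hab hbP
    apply (hcont.mono ?_).intervalIntegrable
    rw [uIcc_of_le hab]
    exact Icc_subset_Icc ha hbP
  have hIcc : (∫ x in Icc (0:ℝ) P, f x) = ∫ x in (0:ℝ)..P, f x := by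
    rw [integral_Icc_eq_integral_Ioc, intervalIntegral.integral_of_le hP]
  have hsplit : (∫ x in (0:ℝ)..P, f x)
      = (∫ x in (0:ℝ)..t, f x) + ((∫ x in t..(P - t), f x) + ∫ x in (P - t)..P, f x) := by
    rw [integral_add_adjacent_intervals (hsub t (P - t) ht htP (by linarith))
      (hsub (P - t) P (by linarith) (by linarith) le_rfl),
      integral_add_adjacent_intervals (hsub 0 t le_rfl ht (by linarith))
      (hsub t P ht (by linarith) le_rfl)]
  have hpow : (∫ x in (0:ℝ)..t, ((x:ℝ):ℂ) ^ (s - 2)) = (t : ℂ) ^ (s - 1) / (s - 1) := by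
    rw [integral_cpow (Or.inl (by linarith))]
    have e : s - 2 + 1 = s - 1 := by ring
    rw [e, Complex.ofReal_zero, Complex.zero_cpow hs1]
    ring
  have h1 : (∫ x in (0:ℝ)..t, f x) = (t : ℂ) ^ (s - 1) / (s - 1) := by
    rw [← hpow]
    apply integral_congr
    intro x hx
    rw [uIcc_of_le ht] at hx
    have h1 : x ≤ P - x := by cases hx with | intro l r => linarith [r, ht2]
    simp [hf, min_eq_left h1, min_eq_left hx.2]
  have h2 : (∫ x in t..(P - t), f x) = ((P : ℂ) - 2 * t) * (t : ℂ) ^ (s - 2) := by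
    have : (∫ x in t..(P - t), f x) = ∫ x in t..(P - t), ((t : ℝ) : ℂ) ^ (s - 2) := by
      apply integral_congr
      intro x hx
      rw [uIcc_of_le htP] at hx
      have : t ≤ min x (P - x) := le_min hx.1 (by linarith [hx.2])
      simp [hf, min_eq_right this]
    rw [this, intervalIntegral.integral_const, Complex.real_smul]
    push_cast
    ring
  have h3 : (∫ x in (P - t)..P, f x) = (t : ℂ) ^ (s - 1) / (s - 1) := by
    have : (∫ x in (P - t)..P, f x) = ∫ x in (P - t)..P, (((P - x : ℝ)) : ℂ) ^ (s - 2) := by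
      apply integral_congr
      intro x hx
      rw [uIcc_of_le (by linarith : P - t ≤ P)] at hx
      have hx1 : P - x ≤ t := by linarith [hx.1]
      have hx2 : P - x ≤ x := by linarith [hx.1, ht2]
      simp [hf, min_eq_right hx2, min_eq_left hx1]
    rw [this, integral_comp_sub_left (fun x : ℝ => ((x:ℝ):ℂ) ^ (s - 2)) P]
    simpa using hpow
  rw [hIcc, hsplit, h1, h2, h3]
  ring

lemma tent (Q : ℝ) (hQ : 0 ≤ Q) (g : ℝ → ℂ)
    (hg : ContinuousOn (fun y => g (min y (Q - y))) (Icc 0 Q)) :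
    (∫ y in Icc (0:ℝ) Q, g (min y (Q - y))) = 2 * ∫ y in (0:ℝ)..(Q/2), g y := by
  have hQ2 : (0:ℝ) ≤ Q/2 := by linarith
  set f : ℝ → ℂ := fun y => g (min y (Q - y)) with hf
  have hIcc : (∫ y in Icc (0:ℝ) Q, f y) = ∫ y in (0:ℝ)..Q, f y := by
    rw [integral_Icc_eq_integral_Ioc, intervalIntegral.integral_of_le hQ]
  have hi1 : IntervalIntegrable f volume 0 (Q/2) :=
    (hg.mono (by rw [uIcc_of_le hQ2]; exact Icc_subset_Icc le_rfl (by linarith))).intervalIntegrable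
  have hi2 : IntervalIntegrable f volume (Q/2) Q :=
    (hg.mono (by rw [uIcc_of_le (by linarith)]; exact Icc_subset_Icc hQ2 le_rfl)).intervalIntegrable
  have hsplit := integral_add_adjacent_intervals hi1 hi2
  have e1 : (∫ y in (0:ℝ)..(Q/2), f y) = ∫ y in (0:ℝ)..(Q/2), g y := by
    apply integral_congr
    intro y hy
    rw [uIcc_of_le hQ2] at hy
    simp [hf, min_eq_left (by linarith [hy.1, hy.2] : y ≤ Q - y)]
  have e2 : (∫ y in (Q/2)..Q, f y) = ∫ y in (0:ℝ)..(Q/2), g y := by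
    have h : (∫ y in (Q/2)..Q, f y) = ∫ y in (Q/2)..Q, g (Q - y) := by
      apply integral_congr
      intro y hy
      rw [uIcc_of_le (by linarith : Q/2 ≤ Q)] at hy
      simp [hf, min_eq_right (by linarith [hy.1] : Q - y ≤ y)]
    rw [h, integral_comp_sub_left g Q, show Q - Q = 0 by ring, show Q - Q/2 = Q/2 by ring]
  rw [hIcc, ← hsplit, e1, e2]
  ring

theorem stmt1 (P Q : ℝ) (hQ : 0 < Q) (hPQ : Q ≤ P) (s : ℂ) (hs : 2 < s.re) :
    s * (s - 1) *
        (∫ p in Set.Icc (0 : ℝ) P ×ˢ Set.Icc (0 : ℝ) Q,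
          ((min (min p.1 (P - p.1)) (min p.2 (Q - p.2)) : ℝ) : ℂ) ^ (s - 2))
      = 8 * ((Q / 2 : ℝ) : ℂ) ^ s + 2 * s * ((P - Q : ℝ) : ℂ) * ((Q / 2 : ℝ) : ℂ) ^ (s - 1) := by
  have hre2 : 0 < (s - 2).re := by simp [Complex.sub_re]; linarith
  have hre1 : 0 < (s - 1).re := by simp [Complex.sub_re]; linarith
  have hres : 0 < s.re := by linarith
  have hs0 : s ≠ 0 := fun h => by simp [h] at hres
  have hs1 : s - 1 ≠ 0 := fun h => by simp [h] at hre1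
  have hs2 : s - 2 ≠ 0 := fun h => by simp [h] at hre2
  have hP : (0:ℝ) ≤ P := by linarith
  have hQ2 : (0:ℝ) < Q / 2 := by linarith
  set S : Set (ℝ × ℝ) := Set.Icc (0 : ℝ) P ×ˢ Set.Icc (0 : ℝ) Q with hS
  set F : ℝ × ℝ → ℂ :=
    fun p => ((min (min p.1 (P - p.1)) (min p.2 (Q - p.2)) : ℝ) : ℂ) ^ (s - 2) with hF
  have hSmeas : MeasurableSet S := measurableSet_Icc.prod measurableSet_Icc
  have hcontF : ContinuousOn F S := by
    apply (contOn_cpowR (s - 2) hre2).comp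
    · exact Continuous.continuousOn
        ((continuous_fst.min (continuous_const.sub continuous_fst)).min
          (continuous_snd.min (continuous_const.sub continuous_snd)))
    · intro p hp
      obtain ⟨⟨h1, h2⟩, h3, h4⟩ := hp
      simp only [mem_Ici, le_min_iff]
      exact ⟨⟨h1, by linarith⟩, h3, by linarith⟩
  have hbound : ∀ p ∈ S, ‖F p‖ ≤ (Q / 2) ^ (s - 2).re := by
    intro p hp
    obtain ⟨⟨h1, h2⟩, h3, h4⟩ := hp
    set u : ℝ := min (min p.1 (P - p.1)) (min p.2 (Q - p.2)) with hu
    have hu0 : 0 ≤ u := le_min (le_min h1 (by linarith)) (le_min h3 (by linarith))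
    have huQ : u ≤ Q / 2 := by
      rcases le_total p.2 (Q / 2) with h | h
      · exact le_trans (min_le_right _ _) (le_trans (min_le_left _ _) h)
      · exact le_trans (min_le_right _ _) (le_trans (min_le_right _ _) (by linarith))
    rcases eq_or_lt_of_le hu0 with h | h
    · simp only [hF]
      rw [← hu, ← h]
      simp [Complex.zero_cpow hs2]
      positivity
    · simp only [hF]
      rw [← hu, Complex.norm_cpow_eq_rpow_re_of_pos h]
      exact Real.rpow_le_rpow hu0 huQ hre2.le
  have hInt : IntegrableOn F S volume :=
    ⟨hcontF.aestronglyMeasurable hSmeas,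
      HasFiniteIntegral.restrict_of_bounded (C := (Q / 2) ^ (s - 2).re)
        ((isCompact_Icc.prod isCompact_Icc).measure_lt_top)
        (ae_restrict_of_forall_mem hSmeas hbound)⟩
  have hprodμ : (volume : Measure (ℝ × ℝ)).restrict S
      = (volume.restrict (Set.Icc (0:ℝ) P)).prod (volume.restrict (Set.Icc (0:ℝ) Q)) := by
    rw [Measure.prod_restrict]
    rfl
  have hFub : (∫ p in S, F p) = ∫ y in Icc (0:ℝ) Q, ∫ x in Icc (0:ℝ) P, F (x, y) := by
    rw [hprodμ]
    exact integral_prod_symm F (by rwa [← hprodμ])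
  set Ifun : ℝ → ℂ :=
    fun t => 2 * (t : ℂ) ^ (s - 1) / (s - 1) + ((P : ℂ) - 2 * (t : ℂ)) * (t : ℂ) ^ (s - 2)
    with hIfun
  have hinner : EqOn (fun y : ℝ => ∫ x in Icc (0:ℝ) P, F (x, y))
      (fun y => Ifun (min y (Q - y))) (Icc (0:ℝ) Q) := by
    intro y hy
    obtain ⟨hy1, hy2⟩ := hy
    have ht0 : 0 ≤ min y (Q - y) := le_min hy1 (by linarith)
    have ht2 : 2 * min y (Q - y) ≤ P := by
      have := min_le_left y (Q - y)
      have := min_le_right y (Q - y)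
      linarith
    simpa [hF, hIfun] using inner_eval P s hs (min y (Q - y)) ht0 ht2
  have hIcont : ContinuousOn (fun y : ℝ => Ifun (min y (Q - y))) (Icc (0:ℝ) Q) := by
    have hI : ContinuousOn Ifun (Ici (0:ℝ)) := by
      apply ContinuousOn.add
      · exact (continuousOn_const.mul (contOn_cpowR (s - 1) hre1)).div_const _
      · exact (continuousOn_const.sub
          (continuousOn_const.mul Complex.continuous_ofReal.continuousOn)).mul
          (contOn_cpowR (s - 2) hre2)
    apply hI.comp (Continuous.continuousOn
      (continuous_id.min (continuous_const.sub continuous_id)))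
    intro y hy
    exact le_min hy.1 (by simpa using hy.2)
  have hmul : ∀ y : ℝ, 0 ≤ y → (y : ℂ) ^ (s - 1) = (y : ℂ) * (y : ℂ) ^ (s - 2) := by
    intro y hy
    rcases eq_or_lt_of_le hy with h | h
    · rw [← h]
      simp [Complex.zero_cpow hs1, Complex.zero_cpow hs2]
    · have hy0 : (y : ℂ) ≠ 0 := by exact_mod_cast h.ne'
      rw [show s - 1 = 1 + (s - 2) by ring, Complex.cpow_add _ _ hy0, Complex.cpow_one]
  have hcongr : EqOn Ifun
      (fun y : ℝ => (2 / (s - 1) - 2) * (y : ℂ) ^ (s - 1) + (P : ℂ) * (y : ℂ) ^ (s - 2))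
      (Set.uIcc 0 (Q / 2)) := by
    intro y hy
    rw [uIcc_of_le hQ2.le] at hy
    simp only [hIfun]
    rw [hmul y hy.1]
    ring
  have hJ : (∫ y in (0:ℝ)..(Q / 2), Ifun y)
      = (2 / (s - 1) - 2) * ((Q / 2 : ℝ) : ℂ) ^ s / s
        + (P : ℂ) * ((Q / 2 : ℝ) : ℂ) ^ (s - 1) / (s - 1) := by
    rw [integral_congr hcongr,
      integral_add ((intervalIntegrable_cpow (Or.inl hre1.le)).const_mul _)
        ((intervalIntegrable_cpow (Or.inl hre2.le)).const_mul _),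
      intervalIntegral.integral_const_mul, intervalIntegral.integral_const_mul,
      integral_cpow (Or.inl (by linarith : (-1:ℝ) < (s - 1).re)),
      integral_cpow (Or.inl (by linarith : (-1:ℝ) < (s - 2).re)),
      show s - 1 + 1 = s by ring, show s - 2 + 1 = s - 1 by ring,
      Complex.ofReal_zero, Complex.zero_cpow hs0, Complex.zero_cpow hs1]
    ring
  have hpow : ((Q / 2 : ℝ) : ℂ) ^ s = ((Q / 2 : ℝ) : ℂ) ^ (s - 1) * ((Q / 2 : ℝ) : ℂ) := by
    have hb : ((Q / 2 : ℝ) : ℂ) ≠ 0 := by exact_mod_cast hQ2.ne'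
    rw [show s = (s - 1) + 1 by ring, Complex.cpow_add _ _ hb, Complex.cpow_one]
    ring_nf
  rw [hFub, setIntegral_congr_fun measurableSet_Icc hinner,
    tent Q hQ.le Ifun hIcont, hJ, hpow]
  push_cast
  field_simp
  ring
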